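/- Assume k·n_{i−1} ≠ e_{i−1} for every i with 1 ≤ i ≤ t and every k in A_i. Let Ω⁺(f_t) and Ω⁻(f_t) denote the sets of positive and negative real roots of the G_t-likelihood polynomial f_t. If Ω⁺(f_t) and Ω⁻(f_t) are both nonempty, and the total number of factor indices (i, k) (counted with multiplicity in A_i) for which k·n_{i−1} < e_{i−1} is even, then, setting a = max Ω⁻(f_t) and b = min Ω⁺(f_t), there exists a real number α with a < α < b such that α is a local maximum point of the function x ↦ f_t(x). -/

import Mathlib

open Polynomial

/-- Assume `k·n_{i−1} ≠ e_{i−1}` for all factors. If the sets of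
positive and negative real roots of `f_t` are nonempty and the number of factor
indices `(i,k)` (with multiplicity) with `k·n_{i−1} < e_{i−1}` is even, then,
with `a = max Ω⁻(f_t)` and `b = min Ω⁺(f_t)`, there is `α ∈ (a,b)` which is a
local maximum point of `x ↦ f_t(x)`. -/
theorem likelihood_local_max
    (t m : ℕ) (ht : 1 ≤ t) (hm : 1 ≤ m)
    (A : ℕ → Multiset ℕ)
    (hAcard : ∀ i ∈ Finset.Icc 1 t, (A i).card = m)
    (hApos : ∀ i ∈ Finset.Icc 1 t, ∀ k ∈ A i, 0 < k)
    (n e : ℕ → ℕ)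
    (hn : ∀ i ∈ Finset.Icc 1 t, 0 < n (i - 1))
    (he : ∀ i ∈ Finset.Icc 1 t, 0 < e (i - 1))
    (hne : ∀ i ∈ Finset.Icc 1 t, ∀ k ∈ A i, k * n (i - 1) ≠ e (i - 1))
    (f : Polynomial ℝ)
    (hf : f = ∏ j ∈ Finset.Icc 1 t,
        ((A j).map (fun l =>
          Polynomial.C ((l : ℝ) / (e (j - 1) : ℝ) - 1 / (n (j - 1) : ℝ)) * Polynomial.X
            + Polynomial.C (1 / (n (j - 1) : ℝ)))).prod)
    (hpos : {x : ℝ | 0 < x ∧ f.IsRoot x}.Nonempty)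
    (hneg : {x : ℝ | x < 0 ∧ f.IsRoot x}.Nonempty)
    (heven : Even (∑ i ∈ Finset.Icc 1 t,
        ((A i).filter (fun k => k * n (i - 1) < e (i - 1))).card))
    (a b : ℝ)
    (ha : IsGreatest {x : ℝ | x < 0 ∧ f.IsRoot x} a)
    (hb : IsLeast {x : ℝ | 0 < x ∧ f.IsRoot x} b) :
    ∃ α : ℝ, a < α ∧ α < b ∧ IsLocalMax (fun x : ℝ => f.eval x) α := by
  have ha0 : a < 0 := ha.1.1
  have hb0 : 0 < b := hb.1.1
  have hab : a < b := ha0.trans hb0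
  -- f(0) > 0
  have hf0 : 0 < f.eval 0 := by
    rw [hf, eval_prod]
    apply Finset.prod_pos
    intro j hj
    rw [eval_multiset_prod, Multiset.map_map]
    apply Multiset.prod_pos
    intro x hx
    rw [Multiset.mem_map] at hx
    obtain ⟨l, hl, rfl⟩ := hx
    simp only [Function.comp_apply, eval_add, eval_mul, eval_C, eval_X, mul_zero, zero_add]
    have := hn j hj
    positivity
  -- max of f on [a,b]
  have hc : ContinuousOn (fun x : ℝ => f.eval x) (Set.Icc a b) :=
    (f.continuous_aeval).continuousOn
  obtain ⟨α, hαmem, hαmax⟩ := (isCompact_Icc (a := a) (b := b)).exists_isMaxOn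
    ⟨0, le_of_lt ha0, le_of_lt hb0⟩ hc
  have h0mem : (0 : ℝ) ∈ Set.Icc a b := ⟨le_of_lt ha0, le_of_lt hb0⟩
  have hαpos : 0 < f.eval α := lt_of_lt_of_le hf0 (hαmax h0mem)
  have hαa : a < α := by
    rcases lt_or_eq_of_le hαmem.1 with h | h
    · exact h
    · exfalso; rw [← h] at hαpos
      exact absurd ha.1.2 (by simp [Polynomial.IsRoot]; linarith)
  have hαb : α < b := by
    rcases lt_or_eq_of_le hαmem.2 with h | h
    · exact h
    · exfalso; rw [h] at hαpos
      exact absurd hb.1.2 (by simp [Polynomial.IsRoot]; linarith)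
  refine ⟨α, hαa, hαb, hαmax.isLocalMax ?_⟩
  exact Icc_mem_nhds hαa hαb
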